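/- Let $\mu$ be a compactly supported probability measure on $\mathbb{R}$ and $s>0$, and let $\mu_s = U_s\mu$ be the probability measure whose Cauchy transform is $G_{\mu_s}(z) = s\,G_\mu(z) + (1-s)/z$. Then the S-transform satisfies $S_{\mu_s}(z) = \frac{1+z}{s+z}\, S_\mu(z/s)$. -/

import Mathlib

open MeasureTheory Filter

/-- The moment series `ψ_μ(z) = ∫ zx/(1-zx) dμ(x)` (as a function of `z ∈ ℂ`). -/
noncomputable def momentSeries (μ : Measure ℝ) (z : ℂ) : ℂ :=
  ∫ x, (z * (x : ℂ)) / (1 - z * (x : ℂ)) ∂μ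

open Metric
open scoped Topology
lemma integrable_inv_sub (ν : Measure ℝ) [IsProbabilityMeasure ν] {z : ℂ} (hz : z.im ≠ 0) :
    Integrable (fun x : ℝ => (z - (x : ℂ))⁻¹) ν := by
  have hmeas : AEStronglyMeasurable (fun x : ℝ => (z - (x : ℂ))⁻¹) ν :=
    ((measurable_const.sub Complex.measurable_ofReal).inv).aestronglyMeasurable
  refine (integrable_const (|z.im|⁻¹)).mono' hmeas ?_
  filter_upwards with x
  rw [norm_inv]
  have h1 : |z.im| ≤ ‖z - (x:ℂ)‖ := by
    have := Complex.abs_im_le_norm (z - (x:ℂ))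
    simpa using this
  have h2 : (0:ℝ) < |z.im| := abs_pos.mpr hz
  calc ‖z - (x:ℂ)‖⁻¹ ≤ |z.im|⁻¹ := by
        apply inv_anti₀ h2 h1
  _ ≤ |z.im|⁻¹ := le_refl _

lemma momentSeries_eq_cauchy (ν : Measure ℝ) [IsProbabilityMeasure ν] {w : ℂ} (hw : w.im ≠ 0) :
    momentSeries ν w = -1 + w⁻¹ * ∫ x, (w⁻¹ - (x : ℂ))⁻¹ ∂ν := by
  have hw0 : w ≠ 0 := fun h => hw (by simp [h])
  have hwi : (w⁻¹).im ≠ 0 := by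
    rw [Complex.inv_im]
    simp only [ne_eq, neg_eq_zero, div_eq_zero_iff]
    push_neg
    exact ⟨hw, by simpa [Complex.normSq_eq_norm_sq] using hw0⟩
  have hint := integrable_inv_sub ν hwi
  have hpt : ∀ x : ℝ, (w * (x:ℂ)) / (1 - w * x) = -1 + w⁻¹ * (w⁻¹ - x)⁻¹ := by
    intro x
    have h1 : (1 : ℂ) - w * x ≠ 0 := by
      intro h
      have him : ((1:ℂ) - w * x).im = -(w.im * x) := by
        simp [Complex.sub_im, Complex.mul_im]
      rw [h] at him
      simp only [Complex.zero_im] at him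
      have hx : x = 0 := by
        rcases mul_eq_zero.mp (by linarith [him.symm] : w.im * x = 0) with h' | h'
        · exact absurd h' hw
        · exact h'
      rw [hx] at h; simp at h
    have h2 : w⁻¹ - (x:ℂ) ≠ 0 := fun h => hwi (by
      have : (w⁻¹ - (x:ℂ)).im = w⁻¹.im := by simp
      rw [h] at this; simpa using this.symm)
    field_simp
    ring
  rw [momentSeries]
  simp_rw [hpt]
  rw [integral_add (integrable_const _) (hint.const_mul _), integral_const,
    MeasureTheory.integral_const_mul]
  simp

lemma momentSeries_hasDeriv (μ : Measure ℝ) [IsProbabilityMeasure μ] (K : Set ℝ)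
    (hK : IsCompact K) (hsupp : μ Kᶜ = 0) :
    AnalyticAt ℂ (momentSeries μ) 0 ∧
      HasDerivAt (momentSeries μ) (∫ x, (x : ℂ) ∂μ) 0 := by
  obtain ⟨R, hR⟩ := hK.isBounded.subset_closedBall 0
  set R' := max R 1 with hR'
  have hR1 : (0:ℝ) < R' := lt_of_lt_of_le one_pos (le_max_right _ _)
  have hae : ∀ᵐ x ∂μ, |x| ≤ R' := by
    have hK' : ∀ᵐ x ∂μ, x ∈ K := by
      rw [ae_iff]
      exact hsupp
    refine hK'.mono fun x hx => ?_
    have := hR hx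
    rw [Real.closedBall_eq_Icc] at this
    rw [abs_le]
    constructor <;> [linarith [this.1, le_max_left R 1]; linarith [this.2, le_max_left R 1]]
  set r := (2 * R')⁻¹ with hrdef
  have hrpos : (0:ℝ) < r := by positivity
  -- denominator bounds
  have hden : ∀ (z : ℂ) (x : ℝ), ‖z‖ < r → |x| ≤ R' →
      (1/2 : ℝ) ≤ ‖(1:ℂ) - z * x‖ ∧ ((1:ℂ) - z * x) ≠ 0 := by
    intro z x hz hx
    have hzx : ‖z * (x:ℂ)‖ ≤ 1/2 := by
      rw [norm_mul, Complex.norm_real, Real.norm_eq_abs]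
      calc ‖z‖ * |x| ≤ r * R' := by
            apply mul_le_mul hz.le hx (abs_nonneg x) hrpos.le
      _ = 1/2 := by rw [hrdef]; field_simp
    have hlow : (1/2 : ℝ) ≤ ‖(1:ℂ) - z * x‖ := by
      have := norm_sub_norm_le (1:ℂ) (z * x)
      simp only [norm_one] at this
      linarith
    exact ⟨hlow, fun h => by rw [h] at hlow; simp at hlow; linarith⟩
  have key : ∀ z₀ ∈ Metric.ball (0:ℂ) r,
      HasDerivAt (momentSeries μ) (∫ x, (x:ℂ) / (1 - z₀ * x)^2 ∂μ) z₀ := by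
    intro z₀ hz₀
    rw [mem_ball_zero_iff] at hz₀
    set ε := r - ‖z₀‖ with hε
    have hεpos : 0 < ε := sub_pos.mpr hz₀
    have hball : ∀ z ∈ Metric.ball z₀ ε, ‖z‖ < r := by
      intro z hz
      rw [mem_ball] at hz
      calc ‖z‖ ≤ ‖z - z₀‖ + ‖z₀‖ := by
            simpa using norm_add_le (z - z₀) z₀
      _ < ε + ‖z₀‖ := by rw [dist_eq_norm] at hz; linarith
      _ = r := by simp [hε]
    have hFmeas : ∀ᶠ z in 𝓝 z₀,
        AEStronglyMeasurable (fun x : ℝ => (z * (x:ℂ))/(1 - z * x)) μ := by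
      filter_upwards with z
      exact ((measurable_const.mul Complex.measurable_ofReal).div
        (measurable_const.sub (measurable_const.mul Complex.measurable_ofReal))).aestronglyMeasurable
    have hFint : Integrable (fun x : ℝ => (z₀ * (x:ℂ))/(1 - z₀ * x)) μ := by
      refine (integrable_const (1:ℝ)).mono' ?_ ?_
      · exact ((measurable_const.mul Complex.measurable_ofReal).div
          (measurable_const.sub (measurable_const.mul Complex.measurable_ofReal))).aestronglyMeasurable
      · filter_upwards [hae] with x hx
        obtain ⟨hlow, _⟩ := hden z₀ x hz₀ hx
        rw [norm_div]
        have hnum : ‖z₀ * (x:ℂ)‖ ≤ 1/2 := by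
          rw [norm_mul, Complex.norm_real, Real.norm_eq_abs]
          calc ‖z₀‖ * |x| ≤ r * R' := mul_le_mul hz₀.le hx (abs_nonneg x) hrpos.le
          _ = 1/2 := by rw [hrdef]; field_simp
        calc ‖z₀ * (x:ℂ)‖ / ‖(1:ℂ) - z₀ * x‖ ≤ (1/2) / (1/2) := by
              apply div_le_div₀ (by norm_num) hnum (by norm_num) hlow
        _ = 1 := by norm_num
    have hF'meas : AEStronglyMeasurable (fun x : ℝ => (x:ℂ)/(1 - z₀ * x)^2) μ :=
      (Complex.measurable_ofReal.div
        ((measurable_const.sub (measurable_const.mul Complex.measurable_ofReal)).pow_const 2)).aestronglyMeasurable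
    have hbound : ∀ᵐ (x : ℝ) ∂μ, ∀ z ∈ Metric.ball z₀ ε, ‖(x:ℂ)/(1 - z * x)^2‖ ≤ 4 * R' := by
      filter_upwards [hae] with x hx z hz
      obtain ⟨hlow, _⟩ := hden z x (hball z hz) hx
      rw [norm_div, norm_pow]
      have h4 : (1/4 : ℝ) ≤ ‖(1:ℂ) - z * x‖^2 := by nlinarith
      have hxnorm : ‖(x:ℂ)‖ ≤ R' := by rw [Complex.norm_real, Real.norm_eq_abs]; exact hx
      calc ‖(x:ℂ)‖ / ‖(1:ℂ) - z * x‖^2 ≤ R' / (1/4) :=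
            div_le_div₀ (le_of_lt hR1) hxnorm (by norm_num) h4
      _ = 4 * R' := by ring
    have hdiff : ∀ᵐ (x : ℝ) ∂μ, ∀ z ∈ Metric.ball z₀ ε,
        HasDerivAt (fun w : ℂ => (w * (x:ℂ))/(1 - w * x)) ((x:ℂ)/(1 - z * x)^2) z := by
      filter_upwards [hae] with x hx z hz
      obtain ⟨_, hne⟩ := hden z x (hball z hz) hx
      have h1 : HasDerivAt (fun w : ℂ => w * (x:ℂ)) (x:ℂ) z := by
        simpa using (hasDerivAt_id z).mul_const (x:ℂ)
      have h2 : HasDerivAt (fun w : ℂ => (1:ℂ) - w * x) (-(x:ℂ)) z := by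
        exact ((hasDerivAt_const z (1:ℂ)).sub h1).congr_deriv (zero_sub _)
      have := h1.div h2 hne
      refine this.congr_deriv ?_
      ring
    have := hasDerivAt_integral_of_dominated_loc_of_deriv_le
      (F := fun (z : ℂ) (x : ℝ) => (z * (x:ℂ))/(1 - z * x))
      (F' := fun (z : ℂ) (x : ℝ) => (x:ℂ)/(1 - z * x)^2)
      (Metric.ball_mem_nhds z₀ hεpos) hFmeas hFint hF'meas hbound (integrable_const _) hdiff
    exact this.2
  have hd0 : HasDerivAt (momentSeries μ) (∫ x, (x:ℂ) ∂μ) 0 := by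
    have := key 0 (mem_ball_self hrpos)
    simpa using this
  refine ⟨?_, hd0⟩
  have hdiffOn : DifferentiableOn ℂ (momentSeries μ) (Metric.ball (0:ℂ) r) :=
    fun z hz => ((key z hz).differentiableAt).differentiableWithinAt
  exact hdiffOn.analyticAt (Metric.isOpen_ball.mem_nhds (mem_ball_self hrpos))

/-- Let `μ` be a compactly supported probability measure on `ℝ` with
nonzero mean, `s > 0`, and let `μ_s = U_s μ` be a probability measure whose Cauchy
transform satisfies `G_{μ_s}(z) = s G_μ(z) + (1-s)/z`.  If `χ_μ` and `χ_{μ_s}` are the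
local inverses at `0` of the moment series `ψ_μ` and `ψ_{μ_s}`, so that the S-transforms
are `S_ν(z) = ((1+z)/z) χ_ν(z)`, then `S_{μ_s}(z) = ((1+z)/(s+z)) S_μ(z/s)` near `0`. -/
theorem stmt16 (μ μs : Measure ℝ) [IsProbabilityMeasure μ] [IsProbabilityMeasure μs]
    (K : Set ℝ) (hK : IsCompact K) (hsupp : μ Kᶜ = 0)
    (s : ℝ) (hs : 0 < s)
    (hG : ∀ z : ℂ, z.im ≠ 0 →
      ∫ x, (z - (x : ℂ))⁻¹ ∂μs = (s : ℂ) * ∫ x, (z - (x : ℂ))⁻¹ ∂μ + (1 - (s : ℂ)) / z)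
    (hmean : ∫ x, x ∂μ ≠ 0)
    (χμ χμs : ℂ → ℂ)
    (hχμ : AnalyticAt ℂ χμ 0) (hχμ0 : χμ 0 = 0)
    (hχμs : AnalyticAt ℂ χμs 0) (hχμs0 : χμs 0 = 0)
    (hinvμ : ∀ᶠ z in nhdsWithin (0 : ℂ) {(0 : ℂ)}ᶜ, momentSeries μ (χμ z) = z)
    (hinvμs : ∀ᶠ z in nhdsWithin (0 : ℂ) {(0 : ℂ)}ᶜ, momentSeries μs (χμs z) = z) :
    ∀ᶠ z in nhdsWithin (0 : ℂ) {(0 : ℂ)}ᶜ,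
      ((1 + z) / z) * χμs z =
        ((1 + z) / ((s : ℂ) + z)) * (((1 + z / (s : ℂ)) / (z / (s : ℂ))) * χμ (z / (s : ℂ))) := by
  have hs0 : (s : ℂ) ≠ 0 := Complex.ofReal_ne_zero.mpr hs.ne'
  obtain ⟨hψa, hψd⟩ := momentSeries_hasDeriv μ K hK hsupp
  -- relation between the two moment series at non-real points
  have hrel : ∀ w : ℂ, w.im ≠ 0 → momentSeries μs w = s * momentSeries μ w := by
    intro w hw
    have hw0 : w ≠ 0 := fun h => hw (by simp [h])
    have hwi : (w⁻¹).im ≠ 0 := by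
      rw [Complex.inv_im]
      simp only [ne_eq, neg_eq_zero, div_eq_zero_iff]
      push_neg
      exact ⟨hw, by simpa [Complex.normSq_eq_norm_sq] using hw0⟩
    rw [momentSeries_eq_cauchy μs hw, momentSeries_eq_cauchy μ hw, hG w⁻¹ hwi]
    set G := ∫ x, (w⁻¹ - (x:ℂ))⁻¹ ∂μ
    field_simp
    ring
  -- injectivity of momentSeries μ near 0
  have hψ0 : momentSeries μ 0 = 0 := by simp [momentSeries]
  have hmean' : (∫ x, (x:ℂ) ∂μ) ≠ 0 := by
    have h := _root_.integral_ofReal (𝕜 := ℂ) (μ := μ) (f := fun x : ℝ => x)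
    intro hc
    apply hmean
    exact RCLike.ofReal_eq_zero.mp (h.symm.trans hc)
  obtain ⟨p, hp⟩ := hψa
  have hstrict : HasStrictDerivAt (momentSeries μ) (∫ x, (x:ℂ) ∂μ) 0 := by
    have h1 := hp.hasStrictDerivAt
    have h2 := h1.hasDerivAt.unique hψd
    rwa [h2] at h1
  set e := (hstrict.hasStrictFDerivAt_equiv hmean').toOpenPartialHomeomorph (momentSeries μ)
    with he
  have hecoe : (e : ℂ → ℂ) = momentSeries μ :=
    HasStrictFDerivAt.toOpenPartialHomeomorph_coe _
  have hinj : Set.InjOn (momentSeries μ) e.source := by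
    rw [← hecoe]; exact e.injOn
  have hUmem : e.source ∈ 𝓝 (0:ℂ) :=
    e.open_source.mem_nhds (HasStrictFDerivAt.mem_toOpenPartialHomeomorph_source _)
  -- χμs is frequently non-real near 0
  have hfreq : ∃ᶠ z in 𝓝[≠] (0:ℂ), (χμs z).im ≠ 0 := by
    by_contra hcon
    rw [Filter.not_frequently] at hcon
    have hcon' : ∀ᶠ z in 𝓝[≠] (0:ℂ), (χμs z).im = 0 := hcon.mono fun z hz => not_not.mp hz
    rw [eventually_nhdsWithin_iff] at hcon'
    have hall : ∀ᶠ z in 𝓝 (0:ℂ), (χμs z).im = 0 := by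
      filter_upwards [hcon'] with z hz
      by_cases h : z = 0
      · rw [h, hχμs0]; simp
      · exact hz h
    rcases hχμs.eventually_constant_or_nhds_le_map_nhds with hc | ho
    · have h1 : ∀ᶠ z in 𝓝[≠] (0:ℂ), χμs z = 0 := by
        filter_upwards [nhdsWithin_le_nhds hc] with z hz
        rw [hz, hχμs0]
      have h2 : ∀ᶠ z in 𝓝[≠] (0:ℂ), z ≠ 0 := eventually_mem_nhdsWithin
      obtain ⟨z, hz1, hz2, hz3⟩ := (h1.and (h2.and hinvμs)).exists
      rw [hz1] at hz3
      have : momentSeries μs 0 = 0 := by simp [momentSeries]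
      exact hz2 (by rw [← hz3, this])
    · rw [hχμs0] at ho
      have hmem : {w : ℂ | w.im = 0} ∈ map χμs (𝓝 (0:ℂ)) := hall
      have hmem' : {w : ℂ | w.im = 0} ∈ 𝓝 (0:ℂ) := ho hmem
      obtain ⟨ε, hε, hball⟩ := Metric.mem_nhds_iff.mp hmem'
      have hin : ((ε/2 : ℝ) : ℂ) * Complex.I ∈ Metric.ball (0:ℂ) ε := by
        rw [mem_ball_zero_iff, norm_mul, Complex.norm_I, mul_one, Complex.norm_real,
          Real.norm_eq_abs, abs_of_pos (half_pos hε)]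
        linarith
      have hcontr := hball hin
      have him : (((ε/2 : ℝ) : ℂ) * Complex.I).im = ε/2 := by simp
      rw [Set.mem_setOf_eq, him] at hcontr
      linarith
  -- identity theorem: momentSeries μ (χμs z) = z / s near 0
  have hcomp : AnalyticAt ℂ (fun z => momentSeries μ (χμs z) - z / s) 0 := by
    have h1 : AnalyticAt ℂ (momentSeries μ) (χμs 0) := by rw [hχμs0]; exact ⟨p, hp⟩
    exact (h1.comp hχμs).sub ((analyticAt_id.div analyticAt_const hs0))
  have hkey : ∀ᶠ z in 𝓝 (0:ℂ), momentSeries μ (χμs z) = z / s := by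
    rcases hcomp.eventually_eq_zero_or_eventually_ne_zero with h0 | hne
    · filter_upwards [h0] with z hz
      exact sub_eq_zero.mp hz
    · exfalso
      obtain ⟨z, him, hHz, hinv⟩ := (hfreq.and_eventually (hne.and hinvμs)).exists
      apply hHz
      have hr := hrel (χμs z) him
      rw [hinv] at hr
      rw [eq_comm] at hr
      have : momentSeries μ (χμs z) = z / s := by
        rw [eq_div_iff hs0]
        linear_combination hr
      rw [this]; ring
  -- pull back hinvμ along z ↦ z/s
  have hmaps : Tendsto (fun z : ℂ => z / s) (𝓝[≠] 0) (𝓝[≠] 0) := by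
    refine tendsto_nhdsWithin_of_tendsto_nhds_of_eventually_within _ ?_ ?_
    · have h : Tendsto (fun z : ℂ => z / s) (𝓝 0) (𝓝 ((0:ℂ) / s)) :=
        (continuous_id.div_const _).tendsto 0
      simpa using h.mono_left nhdsWithin_le_nhds
    · filter_upwards [eventually_mem_nhdsWithin] with z hz
      exact Set.mem_compl_singleton_iff.mpr
        (div_ne_zero (Set.mem_compl_singleton_iff.mp hz) hs0)
  have h2 : ∀ᶠ z in 𝓝[≠] (0:ℂ), momentSeries μ (χμ (z / s)) = z / s := hmaps.eventually hinvμ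
  have hU1 : ∀ᶠ z in 𝓝 (0:ℂ), χμs z ∈ e.source := by
    have hmem : e.source ∈ 𝓝 (χμs 0) := by rw [hχμs0]; exact hUmem
    exact hχμs.continuousAt.eventually_mem hmem
  have hU2 : ∀ᶠ z in 𝓝 (0:ℂ), χμ (z / s) ∈ e.source := by
    have hc2 : ContinuousAt (fun z : ℂ => χμ (z / s)) 0 := by
      apply ContinuousAt.comp
      · simpa using hχμ.continuousAt
      · exact (continuous_id.div_const _).continuousAt
    have hmem : e.source ∈ 𝓝 ((fun z : ℂ => χμ (z / s)) 0) := by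
      simp only [zero_div, hχμ0]
      exact hUmem
    exact hc2.eventually_mem hmem
  have hsz : ∀ᶠ z in 𝓝 (0:ℂ), (s:ℂ) + z ≠ 0 := by
    have hcont : ContinuousAt (fun z : ℂ => (s:ℂ) + z) 0 := by fun_prop
    have hne : (s:ℂ) + 0 ≠ 0 := by simpa using hs0
    exact hcont.eventually_ne hne
  filter_upwards [nhdsWithin_le_nhds hkey, h2, nhdsWithin_le_nhds hU1,
    nhdsWithin_le_nhds hU2, nhdsWithin_le_nhds hsz, eventually_mem_nhdsWithin]
    with z h1 h2' hu1 hu2 hszz hz0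
  have hz0' : z ≠ 0 := Set.mem_compl_singleton_iff.mp hz0
  have heq : χμs z = χμ (z / s) := hinj hu1 hu2 (by rw [h1, h2'])
  rw [heq]
  field_simp
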